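/- Let G = (V,E) be a directed graph with s ∈ V, G'_s its split graph, C' a minimal k-edge-out component of G'_s containing s_out, and C = {v ∈ V : v_out ∈ C'}. Then for every v ∈ C with v ≠ s, the vertex v_in also belongs to C'. (Equivalently: if v_out ∈ C' but v_in ∉ C', then removing from C' the set of vertices reachable from v_in within C' would yield a smaller k-edge-out component with the same number of outgoing edges, contradicting minimality.) -/
import Mathlib


variable {V : Type*} [Fintype V] [DecidableEq V]

/-- The in-copy of a vertex in the split graph (with `s_in` identified with `s_out`). -/
def inV (s v : V) : V ⊕ V := if v = s then Sum.inr s else Sum.inl v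

/-- The out-copy of a vertex in the split graph. -/
def outV (v : V) : V ⊕ V := Sum.inr v

/-- The edges of the split graph `G'_s`. -/
def splitEdges (E : Finset (V × V)) (s : V) : Finset ((V ⊕ V) × (V ⊕ V)) :=
  (E.image (fun e => (outV e.1, inV s e.2))) ∪
    (Finset.univ.image (fun v => (inV s v, outV v)))

/-- The edges leaving a set `C'` in the split graph. -/
def leaving (E : Finset (V × V)) (s : V) (C' : Finset (V ⊕ V)) :
    Finset ((V ⊕ V) × (V ⊕ V)) :=
  (splitEdges E s).filter (fun e => e.1 ∈ C' ∧ e.2 ∉ C')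

/-- if `C'` is a minimal `k`-edge-out component of the split graph `G'_s`
containing `s_out` and `C = {v : v_out ∈ C'}`, then for every `v ∈ C` with `v ≠ s`
the vertex `v_in` also belongs to `C'`. -/
theorem stmt13 (E : Finset (V × V)) (s : V) (k : ℕ) (C' : Finset (V ⊕ V))
    (hsC' : outV s ∈ C')
    (hk : (leaving E s C').card ≤ k)
    (hmin : ∀ D : Finset (V ⊕ V), D ⊂ C' → outV s ∈ D →
      (leaving E s C').card < (leaving E s D).card) :
    ∀ v : V, outV v ∈ C' → v ≠ s → inV s v ∈ C' := by
  intro v hv hvs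
  by_contra hvin
  -- Remove v_out from C'; since the only edge into v_out comes from v_in ∉ C',
  -- no new leaving edges are created.
  have hsub : leaving E s (C'.erase (outV v)) ⊆ leaving E s C' := by
    intro e he
    simp only [leaving, Finset.mem_filter] at he ⊢
    obtain ⟨hse, h1, h2⟩ := he
    refine ⟨hse, Finset.mem_of_mem_erase h1, ?_⟩
    intro h2'
    have he2 : e.2 = outV v := by
      by_contra hne
      exact h2 (Finset.mem_erase.mpr ⟨hne, h2'⟩)
    simp only [splitEdges, Finset.mem_union, Finset.mem_image] at hse
    rcases hse with ⟨⟨a, b⟩, hab, heq⟩ | ⟨w, _, heq⟩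
    · have : inV s b = outV v := by rw [← heq] at he2; exact he2
      unfold inV outV at this
      split at this
      · have : v = s := by injection this.symm
        exact hvs this
      · exact absurd this (by simp)
    · have hw : outV w = outV v := by rw [← heq] at he2; exact he2
      have hwv : w = v := by unfold outV at hw; injection hw
      have : e.1 = inV s v := by rw [← heq, hwv]
      rw [this] at h1
      exact hvin (Finset.mem_of_mem_erase h1)
  have hsne : outV s ≠ outV v := by
    intro h
    exact hvs (by injection h.symm)
  have h1 : (leaving E s C').card < (leaving E s (C'.erase (outV v))).card :=
    hmin _ (Finset.erase_ssubset hv) (Finset.mem_erase.mpr ⟨hsne, hsC'⟩)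
  have h2 := Finset.card_le_card hsub
  omega
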